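/- Fix a dataset x and a neighbor x′ ∼ x, and assume the mechanism densities satisfy m(T|x′) > 0 almost surely under P_x. For w ∈ (0,1), define g(w) = P_x[ m(T|x′)/m(T|x) ≥ (e^{−ε} − w)/(1 − w) ]. Then g(w) = 1 for w ∈ [e^{−ε}, 1), g is non-decreasing on (0, e^{−ε}), and inf_{w∈(0,1)} g(w) = P_x[ m(T|x)/m(T|x′) ≤ e^{ε} ]. -/

import Mathlib

open MeasureTheory Filter

set_option maxHeartbeats 1000000 in
/-- Fix `x ∼ x′`; write `f = m(·|x)`, `g = m(·|x′)` for the mechanism densities,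
with `f, g > 0` a.s. under `P_x = μ`. For `w ∈ (0,1)` let
`G(w) = P_x[g(T)/f(T) ≥ (e^{−ε} − w)/(1 − w)]`. Then `G(w) = 1` for `w ∈ [e^{−ε}, 1)`, `G`
is non-decreasing on `(0, e^{−ε})`, and `inf_{w∈(0,1)} G(w) = P_x[f(T)/g(T) ≤ e^ε]`. -/
theorem stmt7 {T : Type*} [MeasurableSpace T] (μ : Measure T) [IsProbabilityMeasure μ]
    (f g : T → ℝ) (hf : Measurable f) (hg : Measurable g)
    (hfpos : ∀ᵐ t ∂μ, 0 < f t) (hgpos : ∀ᵐ t ∂μ, 0 < g t)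
    (ε : ℝ) (hε : 0 < ε) :
    (∀ w ∈ Set.Ico (Real.exp (-ε)) 1,
        μ {t | (Real.exp (-ε) - w) / (1 - w) ≤ g t / f t} = 1) ∧
    MonotoneOn (fun w => μ {t | (Real.exp (-ε) - w) / (1 - w) ≤ g t / f t})
      (Set.Ioo 0 (Real.exp (-ε))) ∧
    (⨅ w ∈ Set.Ioo (0:ℝ) 1, μ {t | (Real.exp (-ε) - w) / (1 - w) ≤ g t / f t}) =
      μ {t | f t / g t ≤ Real.exp ε} := by
  set c : ℝ := Real.exp (-ε) with hc
  have hc0 : 0 < c := Real.exp_pos _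
  have hc1 : c < 1 := by
    rw [hc, Real.exp_lt_one_iff]; linarith
  have hmeas : ∀ a : ℝ, MeasurableSet {t | a ≤ g t / f t} := fun a =>
    measurableSet_le measurable_const (hg.div hf)
  -- h(w) ≤ c for w ∈ (0,1)
  have hle_c : ∀ w : ℝ, 0 < w → w < 1 → (c - w) / (1 - w) ≤ c := by
    intro w hw0 hw1
    rw [div_le_iff₀ (by linarith)]
    nlinarith
  -- part 1
  have part1 : ∀ w ∈ Set.Ico c 1,
      μ {t | (c - w) / (1 - w) ≤ g t / f t} = 1 := by
    intro w hw
    have hae : {t | (c - w) / (1 - w) ≤ g t / f t} =ᵐ[μ] Set.univ := by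
      filter_upwards [hfpos, hgpos] with t hft hgt
      have h1 : (c - w) / (1 - w) ≤ 0 :=
        div_nonpos_of_nonpos_of_nonneg (by linarith [hw.1]) (by linarith [hw.2])
      have h2 : 0 < g t / f t := div_pos hgt hft
      exact eq_true (by linarith : (c - w) / (1 - w) ≤ g t / f t)
    rw [measure_congr hae, measure_univ]
  -- monotonicity of thresholds
  have hmono_thr : ∀ w1 w2 : ℝ, 0 < w1 → w1 ≤ w2 → w2 < 1 →
      (c - w2) / (1 - w2) ≤ (c - w1) / (1 - w1) := by
    intro w1 w2 h1 h12 h2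
    rw [div_le_div_iff₀ (by linarith) (by linarith)]
    nlinarith
  have part2 : MonotoneOn (fun w => μ {t | (c - w) / (1 - w) ≤ g t / f t})
      (Set.Ioo 0 c) := by
    intro w1 hw1 w2 hw2 h12
    apply measure_mono
    intro t ht
    exact le_trans (hmono_thr w1 w2 hw1.1 h12 (by linarith [hw2.2])) ht
  -- a.e. set equality
  have haeq : μ {t | f t / g t ≤ Real.exp ε} = μ {t | c ≤ g t / f t} := by
    apply measure_congr
    filter_upwards [hfpos, hgpos] with t hft hgt
    have hmul : c * Real.exp ε = 1 := by
      rw [hc, ← Real.exp_add]; simp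
    show (f t / g t ≤ Real.exp ε) = (c ≤ g t / f t)
    simp only [eq_iff_iff]
    rw [div_le_iff₀ hgt, le_div_iff₀ hft]
    constructor
    · intro h; nlinarith [Real.exp_pos ε]
    · intro h; nlinarith [Real.exp_pos ε]
  -- part 3
  have part3 : (⨅ w ∈ Set.Ioo (0:ℝ) 1, μ {t | (c - w) / (1 - w) ≤ g t / f t}) =
      μ {t | f t / g t ≤ Real.exp ε} := by
    rw [haeq]
    apply le_antisymm
    · -- via sequence w_n = 1/(n+2)
      set A : ℕ → Set T := fun n => {t | (c - 1/(n+2)) / (1 - 1/(n+2)) ≤ g t / f t} with hA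
      have hwn : ∀ n : ℕ, (0:ℝ) < 1/(n+2) ∧ (1:ℝ)/(n+2) < 1 := by
        intro n
        constructor
        · positivity
        · rw [div_lt_one (by positivity)]
          have : (0:ℝ) ≤ (n:ℝ) := Nat.cast_nonneg n
          linarith
      have hanti : Antitone A := by
        intro m n hmn t ht
        have h1 : (1:ℝ)/(n+2) ≤ 1/(m+2) := by
          apply div_le_div_of_nonneg_left (by norm_num) (by positivity)
          have : (m:ℝ) ≤ n := Nat.cast_le.mpr hmn
          linarith
        exact le_trans (hmono_thr _ _ (hwn n).1 h1 (hwn m).2) ht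
      have htend0 : Tendsto (fun n : ℕ => (1:ℝ)/(n+2)) atTop (nhds 0) := by
        have h1 : Tendsto (fun x : ℝ => (1:ℝ)/(x+2)) atTop (nhds 0) :=
          Tendsto.comp tendsto_inv_atTop_zero (tendsto_atTop_add_const_right _ 2 tendsto_id) |>.congr (by intro x; simp [one_div])
        exact h1.comp tendsto_natCast_atTop_atTop
      have htendh : Tendsto (fun n : ℕ => (c - 1/(n+2)) / (1 - 1/(n+2))) atTop (nhds c) := by
        have ht1 : Tendsto (fun n : ℕ => c - 1/((n:ℝ)+2)) atTop (nhds (c - 0)) :=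
          tendsto_const_nhds.sub htend0
        have ht2 : Tendsto (fun n : ℕ => 1 - 1/((n:ℝ)+2)) atTop (nhds (1 - 0)) :=
          tendsto_const_nhds.sub htend0
        have h := ht1.div ht2 (by norm_num)
        simpa [Pi.div_def] using h
      have hinter : (⋂ n, A n) = {t | c ≤ g t / f t} := by
        ext t
        simp only [Set.mem_iInter, hA, Set.mem_setOf_eq]
        constructor
        · intro h
          exact le_of_tendsto htendh (Filter.Eventually.of_forall h)
        · intro h n
          exact le_trans (hle_c _ (hwn n).1 (hwn n).2) h
      have htendμ : Tendsto (fun n => μ (A n)) atTop (nhds (μ (⋂ n, A n))) := by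
        apply tendsto_measure_iInter_atTop (fun n => (hmeas _).nullMeasurableSet) hanti ⟨0, measure_ne_top _ _⟩
      rw [hinter] at htendμ
      apply ge_of_tendsto' htendμ
      intro n
      calc (⨅ w ∈ Set.Ioo (0:ℝ) 1, μ {t | (c - w) / (1 - w) ≤ g t / f t})
          ≤ μ {t | (c - 1/(n+2)) / (1 - 1/(n+2)) ≤ g t / f t} :=
            biInf_le _ ⟨(hwn n).1, (hwn n).2⟩
        _ = μ (A n) := rfl
    · apply le_iInf₂
      intro w hw
      apply measure_mono
      intro t ht
      exact le_trans (hle_c w hw.1 hw.2) ht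
  exact ⟨part1, part2, part3⟩
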